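/- For every x ∈ ℝ^d and every k ∈ ℤ, the number of lattice points b ∈ 2^{−k/d} ℤ^d such that ψ_{k,b}(x) ≠ 0 is at most 12^d. -/

import Mathlib

open MeasureTheory

/-- The rectifier (ReLU) function. -/
noncomputable def rect (x : ℝ) : ℝ := max 0 x

/-- The trapezoid function `t`: equal to 2 on [-1,1], vanishing outside (-3,3), linear between. -/
noncomputable def trap (x : ℝ) : ℝ := rect (x + 3) - rect (x + 1) - rect (x - 1) + rect (x - 3)

/-- The scaling ("father") function `φ(x) = C_d · rect(Σ_j t(x_j) − 2(d−1))` on `ℝ^d`. -/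
noncomputable def scalingFn (d : ℕ) (Cd : ℝ) (x : EuclideanSpace ℝ (Fin d)) : ℝ :=
  Cd * rect ((∑ j, trap (x j)) - 2 * ((d : ℝ) - 1))

/-- The ("mother") wavelet `ψ(x) = φ(x) − 2⁻¹ φ(2^{−1/d} x)`. -/
noncomputable def psiFn (d : ℕ) (Cd : ℝ) (x : EuclideanSpace ℝ (Fin d)) : ℝ :=
  scalingFn d Cd x - 2⁻¹ * scalingFn d Cd (((2 : ℝ) ^ (-(1 : ℝ) / d)) • x)

/-- The wavelet term `ψ_{k,b}(x) = 2^{k/2} ψ(2^{k/d}(x − b))`. -/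
noncomputable def psikb (d : ℕ) (Cd : ℝ) (k : ℤ) (b x : EuclideanSpace ℝ (Fin d)) : ℝ :=
  (2 : ℝ) ^ ((k : ℝ) / 2) * psiFn d Cd (((2 : ℝ) ^ ((k : ℝ) / d)) • (x - b))

lemma trap_le_two (x : ℝ) : trap x ≤ 2 := by
  unfold trap rect
  rcases le_total (x+3) 0 with h|h <;> rcases le_total (x+1) 0 with h1|h1 <;>
    rcases le_total (x-1) 0 with h2|h2 <;> rcases le_total (x-3) 0 with h3|h3 <;>
    simp [max_eq_left, max_eq_right, *] <;> linarith

lemma trap_eq_zero {x : ℝ} (h : 3 ≤ |x|) : trap x = 0 := by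
  rcases abs_le'.mp (le_refl |x|) with ⟨-,-⟩
  rcases le_or_gt 3 x with hx | hx
  · unfold trap rect
    rw [max_eq_right (by linarith), max_eq_right (by linarith),
        max_eq_right (by linarith), max_eq_right (by linarith)]
    ring
  · have hx' : x ≤ -3 := by
      rcases abs_cases x with ⟨h1,h2⟩|⟨h1,h2⟩ <;> linarith
    unfold trap rect
    rw [max_eq_left (by linarith), max_eq_left (by linarith),
        max_eq_left (by linarith), max_eq_left (by linarith)]
    ring

lemma scaling_ne_zero {d : ℕ} {Cd : ℝ} {z : EuclideanSpace ℝ (Fin d)}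
    (h : scalingFn d Cd z ≠ 0) (j : Fin d) : |z j| < 3 := by
  by_contra hj
  push_neg at hj
  apply h
  unfold scalingFn rect
  have hsum : (∑ i, trap (z i)) ≤ 2 * ((d : ℝ) - 1) := by
    have : (∑ i, trap (z i)) = trap (z j) + ∑ i ∈ Finset.univ.erase j, trap (z i) :=
      (Finset.add_sum_erase Finset.univ (fun i => trap (z i)) (Finset.mem_univ j)).symm
    rw [this, trap_eq_zero hj, zero_add]
    calc ∑ i ∈ Finset.univ.erase j, trap (z i)
        ≤ ∑ i ∈ Finset.univ.erase j, (2:ℝ) := Finset.sum_le_sum fun i _ => trap_le_two _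
      _ = ((Finset.univ.erase j).card : ℝ) * 2 := by rw [Finset.sum_const]; ring
      _ = 2 * ((d : ℝ) - 1) := by
          rw [Finset.card_erase_of_mem (Finset.mem_univ j), Finset.card_univ, Fintype.card_fin]
          have : 1 ≤ d := Fin.pos_iff_nonempty.mpr ⟨j⟩
          push_cast [Nat.cast_sub this]
          ring
  rw [max_eq_left (by linarith), mul_zero]

/-- at every scale `k`, at most `12^d` lattice points `b ∈ 2^{−k/d}ℤ^d`
have `ψ_{k,b}(x) ≠ 0`. -/
theorem statement8 (d : ℕ) (hd : 1 ≤ d) (Cd : ℝ) (hCd : 0 < Cd)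
    (hnorm : ∫ x : EuclideanSpace ℝ (Fin d), scalingFn d Cd x = 1)
    (x : EuclideanSpace ℝ (Fin d)) (k : ℤ) :
    {b : EuclideanSpace ℝ (Fin d) |
        (∀ j, ∃ n : ℤ, b j = (n : ℝ) * (2 : ℝ) ^ (-(k : ℝ) / d)) ∧
        psikb d Cd k b x ≠ 0}.Finite ∧
    {b : EuclideanSpace ℝ (Fin d) |
        (∀ j, ∃ n : ℤ, b j = (n : ℝ) * (2 : ℝ) ^ (-(k : ℝ) / d)) ∧
        psikb d Cd k b x ≠ 0}.ncard ≤ 12 ^ d := by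
  have hd0 : (0:ℝ) < d := by exact_mod_cast hd
  set p : ℝ := (2 : ℝ) ^ (-(k : ℝ) / d) with hp
  set q : ℝ := (2 : ℝ) ^ ((k : ℝ) / d) with hq
  have hq0 : 0 < q := Real.rpow_pos_of_pos (by norm_num) _
  have hpq : q * p = 1 := by
    rw [hp, hq, ← Real.rpow_add (by norm_num)]
    rw [← add_div, add_neg_cancel, zero_div, Real.rpow_zero]
  -- bound on coordinates where psikb nonzero
  have key : ∀ b : EuclideanSpace ℝ (Fin d), psikb d Cd k b x ≠ 0 →
      ∀ j, |q * (x j - b j)| < 6 := by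
    intro b hb j
    set y : EuclideanSpace ℝ (Fin d) := q • (x - b) with hy
    have hyj : y j = q * (x j - b j) := rfl
    have hpsi : psiFn d Cd y ≠ 0 := by
      intro h
      apply hb
      unfold psikb
      rw [← hq, ← hy, h, mul_zero]
    have hcase : scalingFn d Cd y ≠ 0 ∨
        scalingFn d Cd (((2 : ℝ) ^ (-(1 : ℝ) / d)) • y) ≠ 0 := by
      by_contra hc
      push_neg at hc
      apply hpsi
      unfold psiFn
      rw [hc.1, hc.2]
      ring
    rcases hcase with h | h
    · have := scaling_ne_zero h j
      rw [hyj] at this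
      linarith
    · have h3 := scaling_ne_zero h j
      have hz : (((2 : ℝ) ^ (-(1 : ℝ) / d)) • y) j = (2 : ℝ) ^ (-(1 : ℝ) / d) * y j := rfl
      rw [hz] at h3
      set a : ℝ := (2 : ℝ) ^ ((1 : ℝ) / d) with ha
      have ha0 : 0 < a := Real.rpow_pos_of_pos (by norm_num) _
      have hainv : (2 : ℝ) ^ (-(1 : ℝ) / d) = a⁻¹ := by
        rw [ha, neg_div, Real.rpow_neg (by norm_num)]
      have ha2 : a ≤ 2 := by
        rw [ha]
        calc (2:ℝ) ^ ((1:ℝ)/d) ≤ (2:ℝ) ^ (1:ℝ) := by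
              apply Real.rpow_le_rpow_of_exponent_le (by norm_num)
              rw [div_le_one hd0]
              exact_mod_cast hd
          _ = 2 := Real.rpow_one 2
      rw [hainv, abs_mul, abs_inv, abs_of_pos ha0] at h3
      have : |y j| < 3 * a := by
        rw [inv_mul_lt_iff₀ ha0] at h3
        linarith [h3]
      rw [hyj] at this
      linarith
  -- counting
  classical
  set T : Finset (Fin d → ℤ) :=
    Fintype.piFinset fun j => Finset.Icc (⌊q * x j - 6⌋ + 1) (⌊q * x j - 6⌋ + 12) with hT
  set f : (Fin d → ℤ) → EuclideanSpace ℝ (Fin d) :=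
    fun n => WithLp.toLp 2 (fun j => (n j : ℝ) * p : Fin d → ℝ) with hf
  have hsub : {b : EuclideanSpace ℝ (Fin d) |
      (∀ j, ∃ n : ℤ, b j = (n : ℝ) * p) ∧ psikb d Cd k b x ≠ 0} ⊆ f '' ↑T := by
    rintro b ⟨hlat, hb⟩
    choose n hn using hlat
    refine ⟨n, ?_, ?_⟩
    · rw [Finset.mem_coe, Fintype.mem_piFinset]
      intro j
      have h6 := key b hb j
      have hbn : q * b j = n j := by
        rw [hn j, mul_comm ((n j : ℝ)) p, ← mul_assoc, hpq, one_mul]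
      rw [mul_sub, hbn, abs_lt] at h6
      rw [Finset.mem_Icc]
      constructor
      · have h1 : (⌊q * x j - 6⌋ : ℝ) < n j :=
          lt_of_le_of_lt (Int.floor_le _) (by linarith)
        have : ⌊q * x j - 6⌋ < n j := by exact_mod_cast h1
        omega
      · have h1 : q * x j - 6 < ⌊q * x j - 6⌋ + 1 := Int.lt_floor_add_one _
        have h2 : (n j : ℝ) < (⌊q * x j - 6⌋ : ℝ) + 13 := by linarith
        have : n j < ⌊q * x j - 6⌋ + 13 := by exact_mod_cast h2
        omega
    · ext j
      exact (hn j).symm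
  have hTfin : (f '' ↑T).Finite := T.finite_toSet.image f
  have hfin := hTfin.subset hsub
  refine ⟨hfin, ?_⟩
  have hp0 : p ≠ 0 := ne_of_gt (Real.rpow_pos_of_pos (by norm_num) _)
  have hinj : Function.Injective f := by
    intro m n hmn
    funext j
    have h1 : (m j : ℝ) * p = (n j : ℝ) * p := congrArg (fun v : EuclideanSpace ℝ (Fin d) => v j) hmn
    have := mul_right_cancel₀ hp0 h1
    exact_mod_cast this
  calc {b : EuclideanSpace ℝ (Fin d) |
      (∀ j, ∃ n : ℤ, b j = (n : ℝ) * p) ∧ psikb d Cd k b x ≠ 0}.ncard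
      ≤ (f '' ↑T).ncard := Set.ncard_le_ncard hsub hTfin
    _ = (↑T : Set (Fin d → ℤ)).ncard := Set.ncard_image_of_injective _ hinj
    _ = T.card := Set.ncard_coe_finset T
    _ ≤ 12 ^ d := by
        have hc : ∀ j : Fin d,
            (Finset.Icc (⌊q * x j - 6⌋ + 1) (⌊q * x j - 6⌋ + 12)).card = 12 := by
          intro j; rw [Int.card_Icc]; omega
        rw [hT, Fintype.card_piFinset]
        simp [hc]
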